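/- arXiv:1010.3875 — 2 statements merged into one kernel-verified Lean document; each statement's English description precedes it below -/
import Mathlib

section
/- Let $d \ge 1$ be an integer and $\alpha > d$. There exist constants $C > 0$ and $\rho_0 \ge 1$ such that for all $\rho \ge \rho_0$ and all real $\theta$, $\Bigl| \int_{\mathbb{R}^d} \Bigl( e^{\sqrt{-1}\,\theta\,\rho^{\frac{2\alpha-d}{2\alpha}}\hat v(y)} - 1 - \sqrt{-1}\,\theta\,\rho^{\frac{2\alpha-d}{2\alpha}}\hat v(y) + \frac{\theta^2}{2}\,\rho^{\frac{2\alpha-d}{\alpha}}\hat v(y)^2 \Bigr)\, e^{-\rho\,\hat v(y)}\,\mathrm{d}y \Bigr| \;\le\; C\, |\theta|^3\, \rho^{-\frac{d}{2\alpha}}$. -/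
open MeasureTheory Real Filter
open scoped Classical

/-- The shape function `v̂(y) = min(|y|^{-α}, 1)`, with `v̂(0) = 1`. -/
noncomputable def hatv (d : ℕ) (α : ℝ) (y : EuclideanSpace ℝ (Fin d)) : ℝ :=
  if y = 0 then 1 else min (‖y‖ ^ (-α)) 1

lemma hatv_nonneg (d : ℕ) (α : ℝ) (y : EuclideanSpace ℝ (Fin d)) : 0 ≤ hatv d α y := by
  unfold hatv; split
  · norm_num
  · exact le_min (Real.rpow_nonneg (norm_nonneg y) _) zero_le_one


lemma uIcc_abs_le {x t : ℝ} (ht : t ∈ Set.uIcc 0 x) : |t| ≤ |x| := by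
  rcases Set.mem_uIcc.1 ht with ⟨h1, h2⟩ | ⟨h1, h2⟩ <;>
    rcases abs_cases t with ⟨e, _⟩ | ⟨e, _⟩ <;>
    rcases abs_cases x with ⟨e2, _⟩ | ⟨e2, _⟩ <;> linarith

lemma expI_hasDerivAt (t : ℝ) :
    HasDerivAt (fun u : ℝ => Complex.exp (Complex.I * u))
      (Complex.I * Complex.exp (Complex.I * t)) t := by
  have h : HasDerivAt (fun z : ℂ => Complex.exp (Complex.I * z))
      (Complex.exp (Complex.I * t) * Complex.I) (t : ℂ) := by
    simpa using ((hasDerivAt_id ((t : ℝ) : ℂ)).const_mul Complex.I).cexp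
  have h2 := h.comp_ofReal
  simpa [mul_comm] using h2

lemma expI_taylor1 (x : ℝ) : ‖Complex.exp (Complex.I * x) - 1‖ ≤ |x| := by
  have := (convex_uIcc (0:ℝ) x).norm_image_sub_le_of_norm_hasDerivWithin_le
    (f := fun u : ℝ => Complex.exp (Complex.I * u))
    (f' := fun u : ℝ => Complex.I * Complex.exp (Complex.I * u)) (C := 1)
    (fun t _ => (expI_hasDerivAt t).hasDerivWithinAt)
    (fun t _ => by
      rw [norm_mul, Complex.norm_I, Complex.norm_exp]
      simp)
    (Set.left_mem_uIcc) (Set.right_mem_uIcc)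
  simpa using this

lemma expI_taylor2 (x : ℝ) :
    ‖Complex.exp (Complex.I * x) - 1 - Complex.I * x‖ ≤ |x| ^ 2 := by
  have := (convex_uIcc (0:ℝ) x).norm_image_sub_le_of_norm_hasDerivWithin_le
    (f := fun u : ℝ => Complex.exp (Complex.I * u) - 1 - Complex.I * u)
    (f' := fun u : ℝ => Complex.I * (Complex.exp (Complex.I * u) - 1)) (C := |x|)
    (fun t _ => by
      have h1 : HasDerivAt (fun u : ℝ => Complex.I * (u : ℂ)) Complex.I t := by
        simpa using ((hasDerivAt_id (t:ℝ)).ofReal_comp.const_mul Complex.I)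
      have := ((expI_hasDerivAt t).sub_const 1).sub h1
      convert this.hasDerivWithinAt using 1
      · rfl
      ring)
    (fun t ht => by
      rw [norm_mul, Complex.norm_I, one_mul]
      exact (expI_taylor1 t).trans (uIcc_abs_le ht))
    (Set.left_mem_uIcc) (Set.right_mem_uIcc)
  simpa [sq] using this

lemma expI_taylor3 (x : ℝ) :
    ‖Complex.exp (Complex.I * x) - 1 - Complex.I * x + (x : ℂ) ^ 2 / 2‖ ≤ |x| ^ 3 := by
  have := (convex_uIcc (0:ℝ) x).norm_image_sub_le_of_norm_hasDerivWithin_le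
    (f := fun u : ℝ => Complex.exp (Complex.I * u) - 1 - Complex.I * u + (u : ℂ) ^ 2 / 2)
    (f' := fun u : ℝ => Complex.I * (Complex.exp (Complex.I * u) - 1 - Complex.I * u))
    (C := |x| ^ 2)
    (fun t _ => by
      have h1 : HasDerivAt (fun u : ℝ => Complex.I * (u : ℂ)) Complex.I t := by
        simpa using ((hasDerivAt_id (t:ℝ)).ofReal_comp.const_mul Complex.I)
      have h2 : HasDerivAt (fun u : ℝ => ((u : ℂ) ^ 2 / 2)) (t : ℂ) t := by
        have := ((hasDerivAt_pow 2 ((t:ℝ):ℂ)).div_const 2).comp_ofReal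
        simpa using this
      have := (((expI_hasDerivAt t).sub_const 1).sub h1).add h2
      convert this.hasDerivWithinAt using 1
      · rfl
      have : Complex.I * Complex.I = -1 := Complex.I_mul_I
      ring_nf
      rw [Complex.I_sq]
      ring)
    (fun t ht => by
      rw [norm_mul, Complex.norm_I, one_mul]
      calc ‖Complex.exp (Complex.I * t) - 1 - Complex.I * t‖ ≤ |t| ^ 2 := expI_taylor2 t
        _ ≤ |x| ^ 2 := pow_le_pow_left₀ (abs_nonneg t) (uIcc_abs_le ht) 2)
    (Set.left_mem_uIcc) (Set.right_mem_uIcc)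
  calc ‖Complex.exp (Complex.I * x) - 1 - Complex.I * x + (x : ℂ) ^ 2 / 2‖
      = ‖(Complex.exp (Complex.I * x) - 1 - Complex.I * x + (x:ℂ)^2/2) -
        (Complex.exp (Complex.I * 0) - 1 - Complex.I * 0 + ((0:ℝ):ℂ)^2/2)‖ := by norm_num
    _ ≤ |x| ^ 2 * ‖x - 0‖ := this
    _ = |x| ^ 3 := by rw [sub_zero, Real.norm_eq_abs]; ring

lemma integrableOn_rpow_compl {d : ℕ} {r : ℝ} (hr : (d : ℝ) < r) :
    IntegrableOn (fun y : EuclideanSpace ℝ (Fin d) => ‖y‖ ^ (-r))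
      ((Metric.closedBall (0 : EuclideanSpace ℝ (Fin d)) 1)ᶜ) volume := by
  have hr0 : 0 < r := lt_of_le_of_lt (by exact_mod_cast Nat.cast_nonneg d) hr
  have hdim : (Module.finrank ℝ (EuclideanSpace ℝ (Fin d)) : ℝ) < r := by
    rwa [finrank_euclideanSpace_fin]
  have base := integrable_one_add_norm (E := EuclideanSpace ℝ (Fin d)) (μ := volume) hdim
  refine Integrable.mono' ((base.const_mul ((2:ℝ) ^ r)).restrict) ?_ ?_
  · exact (Measurable.aestronglyMeasurable (measurable_norm.pow measurable_const))
  · rw [ae_restrict_iff' (measurableSet_closedBall.compl)]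
    filter_upwards with y hy
    rw [Set.mem_compl_iff, Metric.mem_closedBall, dist_zero_right, not_le] at hy
    have hy0 : (0:ℝ) < ‖y‖ := lt_trans one_pos hy
    rw [Real.norm_eq_abs, abs_of_nonneg (Real.rpow_nonneg (norm_nonneg y) _)]
    have key : (1 + ‖y‖) ^ r ≤ (2:ℝ) ^ r * ‖y‖ ^ r := by
      rw [← Real.mul_rpow (by norm_num) (norm_nonneg y)]
      exact Real.rpow_le_rpow (by positivity) (by linarith) hr0.le
    have h1 : (0:ℝ) < ‖y‖ ^ r := Real.rpow_pos_of_pos hy0 r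
    have h2 : (0:ℝ) < (1 + ‖y‖) ^ r := Real.rpow_pos_of_pos (by positivity) r
    have h3 : (1 + ‖y‖) ^ r / (2:ℝ) ^ r ≤ ‖y‖ ^ r := by
      rw [div_le_iff₀ (by positivity)]
      nlinarith [key]
    rw [Real.rpow_neg (norm_nonneg y), Real.rpow_neg (by positivity)]
    calc (‖y‖ ^ r)⁻¹ ≤ ((1 + ‖y‖) ^ r / (2:ℝ) ^ r)⁻¹ := by
          apply inv_anti₀ (by positivity) h3
      _ = (2:ℝ) ^ r * ((1 + ‖y‖) ^ r)⁻¹ := by rw [inv_div, div_eq_mul_inv]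

lemma integral_rpow_compl_scale {d : ℕ} (α3 : ℝ) {R : ℝ} (hR : 0 < R) :
    ∫ y in (Metric.closedBall (0 : EuclideanSpace ℝ (Fin d)) R)ᶜ, ‖y‖ ^ (-α3) =
    R ^ ((d:ℝ) - α3) *
      ∫ z in (Metric.closedBall (0 : EuclideanSpace ℝ (Fin d)) 1)ᶜ, ‖z‖ ^ (-α3) := by
  set E := EuclideanSpace ℝ (Fin d)
  set f : E → ℝ :=
    Set.indicator ((Metric.closedBall (0:E) 1)ᶜ) (fun z => ‖z‖ ^ (-α3)) with hf
  have hinv : (R⁻¹) ^ (-α3) = R ^ α3 := by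
    rw [Real.inv_rpow hR.le, Real.rpow_neg hR.le, inv_inv]
  have h1 : ∀ y : E, f (R⁻¹ • y) =
      R ^ α3 * Set.indicator ((Metric.closedBall (0:E) R)ᶜ) (fun z => ‖z‖ ^ (-α3)) y := by
    intro y
    have hn : ‖R⁻¹ • y‖ = R⁻¹ * ‖y‖ := by
      rw [norm_smul, Real.norm_eq_abs, abs_of_nonneg (inv_nonneg.2 hR.le)]
    by_cases hy : ‖y‖ ≤ R
    · have hmem : R⁻¹ • y ∈ Metric.closedBall (0:E) 1 := by
        rw [mem_closedBall_zero_iff, hn]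
        calc R⁻¹ * ‖y‖ ≤ R⁻¹ * R := by
              exact mul_le_mul_of_nonneg_left hy (inv_nonneg.2 hR.le)
          _ = 1 := inv_mul_cancel₀ hR.ne'
      rw [hf, Set.indicator_of_notMem (by simpa using hmem),
        Set.indicator_of_notMem (by simpa using mem_closedBall_zero_iff.2 hy)]
      ring
    · have hmem : R⁻¹ • y ∉ Metric.closedBall (0:E) 1 := by
        rw [mem_closedBall_zero_iff, hn]
        intro hc
        apply hy
        calc ‖y‖ = R * (R⁻¹ * ‖y‖) := by field_simp
          _ ≤ R * 1 := by exact mul_le_mul_of_nonneg_left hc hR.le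
          _ = R := mul_one R
      rw [hf, Set.indicator_of_mem (by simpa using hmem),
        Set.indicator_of_mem (by simpa using hy), hn,
        Real.mul_rpow (inv_nonneg.2 hR.le) (norm_nonneg y), hinv]
  have h2 := MeasureTheory.Measure.integral_comp_inv_smul_of_nonneg (volume : Measure E) f hR.le
  rw [finrank_euclideanSpace_fin] at h2
  simp_rw [h1] at h2
  rw [MeasureTheory.integral_const_mul, integral_indicator measurableSet_closedBall.compl, hf,
    integral_indicator measurableSet_closedBall.compl, smul_eq_mul] at h2
  have hRα : (0:ℝ) < R ^ α3 := Real.rpow_pos_of_pos hR _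
  rw [Real.rpow_sub hR, Real.rpow_natCast, div_mul_eq_mul_div, eq_div_iff hRα.ne']
  linear_combination h2

set_option maxHeartbeats 2000000 in
/-- Third-order bound for the characteristic-function integral: for large `ρ` and all `θ`,
the integral of the third-order Taylor remainder is bounded by `C|θ|³ρ^{-d/(2α)}`. -/
theorem stmt12 (d : ℕ) (hd : 1 ≤ d) (α : ℝ) (hα : (d : ℝ) < α) :
    ∃ C > (0 : ℝ), ∃ ρ₀ : ℝ, 1 ≤ ρ₀ ∧ ∀ ρ ≥ ρ₀, ∀ θ : ℝ,
      ‖∫ y : EuclideanSpace ℝ (Fin d),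
          (Complex.exp (Complex.I * (θ : ℂ) *
              ((ρ ^ ((2 * α - d) / (2 * α)) * hatv d α y : ℝ) : ℂ)) - 1 -
            Complex.I * (θ : ℂ) * ((ρ ^ ((2 * α - d) / (2 * α)) * hatv d α y : ℝ) : ℂ) +
            ((θ ^ 2 / 2 * (ρ ^ ((2 * α - d) / α) * hatv d α y ^ 2) : ℝ) : ℂ)) *
            Complex.exp (-((ρ * hatv d α y : ℝ) : ℂ))‖
        ≤ C * |θ| ^ 3 * ρ ^ (-(d : ℝ) / (2 * α)) := by
  have hd0 : (0:ℝ) < d := by exact_mod_cast hd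
  have hα0 : (0:ℝ) < α := lt_trans hd0 hα
  have h3α : (d:ℝ) < 3*α := by linarith
  set cb := (volume (Metric.ball (0 : EuclideanSpace ℝ (Fin d)) 1)).toReal with hcb
  set Jc := ∫ z in (Metric.closedBall (0 : EuclideanSpace ℝ (Fin d)) 1)ᶜ, ‖z‖ ^ (-(3*α))
    with hJc
  have hcb0 : 0 ≤ cb := ENNReal.toReal_nonneg
  have hJc0 : 0 ≤ Jc := setIntegral_nonneg measurableSet_closedBall.compl
    (fun z _ => Real.rpow_nonneg (norm_nonneg z) _)
  refine ⟨27*cb + Jc + 1, by positivity, 1, le_refl 1, ?_⟩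
  intro ρ hρ θ
  have hρ0 : (0:ℝ) < ρ := lt_of_lt_of_le one_pos hρ
  set β := (2*α - (d:ℝ))/(2*α) with hβ
  set s := ρ ^ β with hs
  have hs0 : 0 < s := Real.rpow_pos_of_pos hρ0 _
  set R := ρ ^ (α⁻¹) with hR
  have hR0 : 0 < R := Real.rpow_pos_of_pos hρ0 _
  have hR1 : 1 ≤ R := by
    calc (1:ℝ) = ρ ^ (0:ℝ) := (Real.rpow_zero ρ).symm
      _ ≤ R := Real.rpow_le_rpow_of_exponent_le hρ (by positivity)
  set A := Metric.closedBall (0 : EuclideanSpace ℝ (Fin d)) R with hA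
  set c₁ := 27 / ρ ^ (3:ℕ) with hc₁
  set H : EuclideanSpace ℝ (Fin d) → ℝ := fun y =>
    A.indicator (fun _ => c₁) y + Aᶜ.indicator (fun z => ‖z‖ ^ (-(3*α))) y with hH
  -- integrability of H
  have hint1 : Integrable (A.indicator (fun _ => c₁)) volume :=
    (integrableOn_const measure_closedBall_lt_top.ne).integrable_indicator
      measurableSet_closedBall
  have hint2 : Integrable (Set.indicator Aᶜ
      fun z : EuclideanSpace ℝ (Fin d) => ‖z‖ ^ (-(3*α))) volume := by
    refine (IntegrableOn.mono_set (integrableOn_rpow_compl h3α) ?_).integrable_indicator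
      measurableSet_closedBall.compl
    exact Set.compl_subset_compl.2 (Metric.closedBall_subset_closedBall hR1)
  have hHint : Integrable H volume := hint1.add hint2
  -- ρ-power identities
  have hs2 : ρ ^ ((2*α - (d:ℝ))/α) = s^2 := by
    rw [hs, ← Real.rpow_natCast (ρ ^ β) 2, ← Real.rpow_mul hρ0.le]
    congr 1
    rw [hβ]
    field_simp
    ring
  -- a.e. nonzero
  have h01 : (EuclideanSpace.single (⟨0, hd⟩ : Fin d) (1:ℝ)) ≠ 0 := by
    intro h
    have := congrArg (fun v : EuclideanSpace ℝ (Fin d) => v ⟨0, hd⟩) h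
    simpa [EuclideanSpace.single_apply] using this
  haveI : Nontrivial (EuclideanSpace ℝ (Fin d)) := nontrivial_of_ne _ _ h01
  have hae : ∀ᵐ y : EuclideanSpace ℝ (Fin d), y ≠ 0 := by
    refine ae_iff.2 ?_
    simpa using measure_singleton (0 : EuclideanSpace ℝ (Fin d))
  -- main calc
  calc ‖∫ y : EuclideanSpace ℝ (Fin d),
          (Complex.exp (Complex.I * (θ : ℂ) * ((s * hatv d α y : ℝ) : ℂ)) - 1 -
            Complex.I * (θ : ℂ) * ((s * hatv d α y : ℝ) : ℂ) +
            ((θ ^ 2 / 2 * (ρ ^ ((2 * α - d) / α) * hatv d α y ^ 2) : ℝ) : ℂ)) *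
            Complex.exp (-((ρ * hatv d α y : ℝ) : ℂ))‖
      ≤ ∫ y : EuclideanSpace ℝ (Fin d), ‖(Complex.exp (Complex.I * (θ : ℂ) *
            ((s * hatv d α y : ℝ) : ℂ)) - 1 -
            Complex.I * (θ : ℂ) * ((s * hatv d α y : ℝ) : ℂ) +
            ((θ ^ 2 / 2 * (ρ ^ ((2 * α - d) / α) * hatv d α y ^ 2) : ℝ) : ℂ)) *
            Complex.exp (-((ρ * hatv d α y : ℝ) : ℂ))‖ := norm_integral_le_integral_norm _
    _ ≤ ∫ y : EuclideanSpace ℝ (Fin d), (|θ|^3 * s^3) * H y := by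
        refine integral_mono_of_nonneg (Eventually.of_forall fun y => norm_nonneg _)
          (hHint.const_mul _) ?_
        filter_upwards [hae] with y hy
        set v := hatv d α y with hv
        have hv0 : 0 ≤ v := hatv_nonneg d α y
        have hvle : v ≤ ‖y‖ ^ (-α) := by
          rw [hv]; unfold hatv; rw [if_neg hy]; exact min_le_left _ _
        have hρv0 : 0 ≤ ρ * v := by positivity
        have hexp : ‖Complex.exp (-((ρ * v : ℝ) : ℂ))‖ = Real.exp (-(ρ*v)) := by
          rw [Complex.norm_exp]
          simp
        have hxeq : Complex.I * (θ:ℂ) * ((s * v : ℝ) : ℂ) =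
            Complex.I * ((θ * (s*v) : ℝ) : ℂ) := by push_cast; ring
        have hsq : ((θ^2/2 * (ρ ^ ((2*α - (d:ℝ))/α) * v^2) : ℝ) : ℂ) =
            ((θ*(s*v) : ℝ):ℂ)^2/2 := by
          rw [hs2]; push_cast; ring
        have hkey : v^3 * Real.exp (-(ρ*v)) ≤ H y := by
          by_cases hyA : y ∈ A
          · have hHy : H y = c₁ := by
              rw [hH]
              simp only []
              rw [Set.indicator_of_mem hyA, Set.indicator_of_notMem (by simpa using hyA),
                add_zero]
            rw [hHy, hc₁]
            have e1 : ρ * v ≤ 3 * Real.exp ((ρ*v)/3) := by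
              have := Real.add_one_le_exp ((ρ*v)/3); linarith
            have e2 : (ρ*v)^3 ≤ 27 * Real.exp (ρ*v) := by
              calc (ρ*v)^3 ≤ (3 * Real.exp ((ρ*v)/3))^3 := pow_le_pow_left₀ hρv0 e1 3
                _ = 27 * Real.exp ((ρ*v)/3)^3 := by ring
                _ = 27 * Real.exp (ρ*v) := by
                    rw [← Real.exp_nat_mul]
                    norm_num
                    ring_nf
            rw [le_div_iff₀ (by positivity)]
            have e3 : Real.exp (-(ρ*v)) * Real.exp (ρ*v) = 1 := by
              rw [← Real.exp_add]; simp
            have e4 : ρ^3 * v^3 * Real.exp (-(ρ*v)) ≤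
                27 * Real.exp (ρ*v) * Real.exp (-(ρ*v)) := by
              have : (ρ*v)^3 * Real.exp (-(ρ*v)) ≤ (27 * Real.exp (ρ*v)) * Real.exp (-(ρ*v)) :=
                mul_le_mul_of_nonneg_right e2 (Real.exp_nonneg _)
              nlinarith [this]
            nlinarith [e4, e3]
          · have hHy : H y = ‖y‖ ^ (-(3*α)) := by
              rw [hH]
              simp only []
              rw [Set.indicator_of_notMem hyA, Set.indicator_of_mem (Set.mem_compl hyA),
                zero_add]
            rw [hHy]
            have h1 : v^3 ≤ (‖y‖ ^ (-α))^3 := pow_le_pow_left₀ hv0 hvle 3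
            have h2 : (‖y‖ ^ (-α))^(3:ℕ) = ‖y‖ ^ (-(3*α)) := by
              rw [← Real.rpow_natCast (‖y‖ ^ (-α)) 3, ← Real.rpow_mul (norm_nonneg y)]
              congr 1
              push_cast
              ring
            calc v^3 * Real.exp (-(ρ*v)) ≤ v^3 * 1 := by
                  refine mul_le_mul_of_nonneg_left ?_ (pow_nonneg hv0 3)
                  rw [← Real.exp_zero]
                  exact Real.exp_le_exp.2 (by linarith)
              _ = v^3 := mul_one _
              _ ≤ ‖y‖ ^ (-(3*α)) := by rw [← h2]; exact h1
        calc ‖(Complex.exp (Complex.I * (θ : ℂ) * ((s * v : ℝ) : ℂ)) - 1 -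
              Complex.I * (θ : ℂ) * ((s * v : ℝ) : ℂ) +
              ((θ ^ 2 / 2 * (ρ ^ ((2 * α - (d:ℝ)) / α) * v ^ 2) : ℝ) : ℂ)) *
              Complex.exp (-((ρ * v : ℝ) : ℂ))‖
            = ‖Complex.exp (Complex.I * ((θ * (s*v) : ℝ) : ℂ)) - 1 -
              Complex.I * ((θ * (s*v) : ℝ) : ℂ) + ((θ*(s*v) : ℝ):ℂ)^2/2‖ *
              Real.exp (-(ρ*v)) := by rw [norm_mul, hexp, hxeq, hsq]
          _ ≤ |θ * (s*v)|^3 * Real.exp (-(ρ*v)) :=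
              mul_le_mul_of_nonneg_right (expI_taylor3 (θ * (s*v))) (Real.exp_nonneg _)
          _ = (|θ|^3 * s^3) * (v^3 * Real.exp (-(ρ*v))) := by
              rw [abs_mul, abs_mul, abs_of_nonneg hs0.le, abs_of_nonneg hv0]
              ring
          _ ≤ (|θ|^3 * s^3) * H y := by
              refine mul_le_mul_of_nonneg_left hkey (by positivity)
    _ = (|θ|^3 * s^3) * ∫ y : EuclideanSpace ℝ (Fin d), H y := integral_const_mul _ _
    _ ≤ (27*cb + Jc + 1) * |θ| ^ 3 * ρ ^ (-(d : ℝ) / (2 * α)) := by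
        have hHval : ∫ y : EuclideanSpace ℝ (Fin d), H y =
            c₁ * (R^(d:ℕ) * cb) + R^((d:ℝ) - 3*α) * Jc := by
          rw [hH]
          rw [integral_add hint1 hint2, integral_indicator measurableSet_closedBall,
            integral_indicator measurableSet_closedBall.compl, setIntegral_const,
            integral_rpow_compl_scale _ hR0]
          congr 1
          rw [smul_eq_mul, measureReal_def, Measure.addHaar_closedBall _ _ hR0.le,
            finrank_euclideanSpace_fin, ENNReal.toReal_mul,
            ENNReal.toReal_ofReal (by positivity)]
          rw [← hcb]
          ring
        rw [hHval]
        have id1 : R ^ (d:ℕ) = ρ ^ ((d:ℝ)/α) := by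
          rw [← Real.rpow_natCast R d, hR, ← Real.rpow_mul hρ0.le]
          congr 1
          field_simp
        have id2 : R ^ ((d:ℝ) - 3*α) = ρ ^ ((d:ℝ)/α - 3) := by
          rw [hR, ← Real.rpow_mul hρ0.le]
          congr 1
          field_simp
        have id4 : c₁ * ρ^((d:ℝ)/α) = 27 * ρ^((d:ℝ)/α - 3) := by
          rw [hc₁, Real.rpow_sub hρ0, ← Real.rpow_natCast ρ 3]
          norm_num
          ring
        have id3 : s^(3:ℕ) * (ρ^((d:ℝ)/α - 3)) = ρ ^ (-(d:ℝ)/(2*α)) := by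
          rw [hs, ← Real.rpow_natCast (ρ^β) 3, ← Real.rpow_mul hρ0.le, ← Real.rpow_add hρ0]
          congr 1
          rw [hβ]
          field_simp
          ring
        have step : (|θ|^3 * s^3) * (c₁ * (ρ^((d:ℝ)/α) * cb) + ρ^((d:ℝ)/α - 3) * Jc) =
            |θ|^3 * (27*cb + Jc) * (s^3 * ρ^((d:ℝ)/α - 3)) := by
          linear_combination (|θ|^3 * s^3 * cb) * id4
        rw [id1, id2, step, id3]
        have hP : 0 ≤ |θ|^3 * ρ ^ (-(d:ℝ)/(2*α)) := by positivity
        nlinarith [hP]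
end

section
/- Let $\alpha > 1$, consider dimension $d = 1$, and let $\nu > 0$ and $\epsilon > 0$. Then $\lim_{\rho \to \infty} \int_{\{\theta \in \mathbb{R} : |\theta| > \epsilon\, \rho^{1/(3\alpha)}\}} \exp\Bigl\{ -\nu \int_{\mathbb{R}} \bigl( 1 - \cos\bigl(\theta\, \rho^{\frac{2\alpha-1}{2\alpha}}\, \hat v(y)\bigr) \bigr)\, e^{-\rho\,\hat v(y)}\,\mathrm{d}y \Bigr\}\,\mathrm{d}\theta = 0$. -/
open MeasureTheory Real Filter

/-- The shape function on `ℝ`: `v̂(y) = min(|y|^{-α}, 1)`, with `v̂(0) = 1`. -/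
noncomputable def hatv1 (α : ℝ) (y : ℝ) : ℝ :=
  if y = 0 then 1 else min (|y| ^ (-α)) 1

open Set

lemma hatv1_nonneg (α y : ℝ) : 0 ≤ hatv1 α y := by
  unfold hatv1
  split
  · norm_num
  · exact le_min (Real.rpow_nonneg (abs_nonneg y) _) one_pos.le

lemma hatv1_le_one (α y : ℝ) : hatv1 α y ≤ 1 := by
  unfold hatv1
  split
  · exact le_refl 1
  · exact min_le_right _ _

lemma hatv1_of_one_le_abs {α y : ℝ} (hα : 0 < α) (hy : 1 ≤ |y|) :
    hatv1 α y = |y| ^ (-α) := by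
  have hy0 : y ≠ 0 := by
    intro h; rw [h] at hy; simp at hy; linarith
  unfold hatv1
  rw [if_neg hy0, min_eq_left]
  exact Real.rpow_le_one_of_one_le_of_nonpos hy (by linarith)

lemma hatv1_eq (α : ℝ) :
    hatv1 α = fun y => if y = 0 then 1 else min (Real.exp (Real.log |y| * (-α))) 1 := by
  funext y
  unfold hatv1
  split
  · rfl
  · rename_i h
    rw [Real.rpow_def_of_pos (abs_pos.mpr h)]

lemma hatv1_meas (α : ℝ) : Measurable (hatv1 α) := by
  rw [hatv1_eq]
  exact Measurable.ite (measurableSet_singleton 0) measurable_const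
    ((((measurable_abs.log).mul_const (-α)).exp).min measurable_const)

/-- A piecewise bound function: constant on `[-1,1]`, power tail outside. -/
lemma integrable_piecewise_tail (C c q : ℝ) (hq : q < -1) :
    Integrable (fun y : ℝ => if |y| ≤ 1 then C else c * |y| ^ q) := by
  set G : ℝ → ℝ := fun y => if |y| ≤ 1 then C else c * |y| ^ q with hG
  have hGmeas : Measurable G := by
    apply Measurable.ite (measurableSet_le measurable_abs measurable_const) measurable_const
    have : (fun y : ℝ => c * |y| ^ q) = fun y =>
        c * (if y = 0 then (0:ℝ) ^ q else Real.exp (Real.log |y| * q)) := by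
      funext y
      by_cases h : y = 0
      · simp [h]
      · rw [if_neg h, Real.rpow_def_of_pos (abs_pos.mpr h)]
    rw [this]
    exact (Measurable.ite (measurableSet_singleton 0) measurable_const
      ((measurable_abs.log.mul_const q).exp)).const_mul c
  have hIoi : IntegrableOn G (Ioi 1) := by
    have base : IntegrableOn (fun y : ℝ => |c| * y ^ q) (Ioi 1) :=
      (integrableOn_Ioi_rpow_of_lt hq one_pos).const_mul _
    apply base.mono' (hGmeas.aestronglyMeasurable.restrict)
    filter_upwards [ae_restrict_mem measurableSet_Ioi] with y hy
    have hy1 : (1:ℝ) < y := hy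
    have : ¬ |y| ≤ 1 := by rw [abs_of_pos (by linarith)]; linarith
    rw [hG]
    simp only [this, if_false]
    rw [abs_of_pos (by linarith : (0:ℝ) < y), Real.norm_eq_abs, abs_mul,
      abs_of_nonneg (Real.rpow_nonneg (by linarith : (0:ℝ) ≤ y) q)]
  have hIio : IntegrableOn G (Iio (-1)) := by
    have : IntegrableOn (G ∘ (fun x : ℝ => -x)) ((fun x : ℝ => -x) ⁻¹' (Ioi 1)) := by
      rw [(Measure.measurePreserving_neg (volume : Measure ℝ)).integrableOn_comp_preimage
        (Homeomorph.neg ℝ).measurableEmbedding]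
      exact hIoi
    have hset : ((fun x : ℝ => -x) ⁻¹' (Ioi 1)) = Iio (-1) := by
      ext x; simp [lt_neg]
    have hfun : (G ∘ (fun x : ℝ => -x)) = G := by
      funext x; simp only [Function.comp, hG, abs_neg]
    rwa [hset, hfun] at this
  have hIcc : IntegrableOn G (Icc (-1) 1) := by
    refine Measure.integrableOn_of_bounded (measure_Icc_lt_top).ne hGmeas.aestronglyMeasurable
      (M := |C| + |c|) ?_
    filter_upwards [ae_restrict_mem measurableSet_Icc] with y hy
    rw [hG]
    by_cases h : |y| ≤ 1
    · simp only [h, if_true, Real.norm_eq_abs]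
      have := abs_nonneg c; linarith [le_refl |C|]
    · simp only [h, if_false, Real.norm_eq_abs, abs_mul]
      have h1 : 1 < |y| := not_le.mp h
      have : |(|y| ^ q)| ≤ 1 := by
        rw [abs_of_nonneg (Real.rpow_nonneg (abs_nonneg y) q)]
        exact Real.rpow_le_one_of_one_le_of_nonpos h1.le (by linarith)
      nlinarith [abs_nonneg c, abs_nonneg C, abs_nonneg (|y| ^ q)]
  rw [← integrableOn_univ]
  have : (univ : Set ℝ) = Iio (-1) ∪ (Icc (-1) 1 ∪ Ioi 1) := by
    ext x
    simp only [mem_univ, mem_union, mem_Iio, mem_Icc, mem_Ioi, true_iff]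
    by_cases h : x < -1
    · left; exact h
    · right
      by_cases h2 : x ≤ 1
      · left; exact ⟨not_lt.mp h, h2⟩
      · right; exact not_le.mp h2
  rw [this]
  exact (hIio.union (hIcc.union hIoi))

lemma one_sub_cos_lb {x : ℝ} (hx : |x| ≤ 1) : x ^ 2 / 8 ≤ 1 - Real.cos x := by
  have hπ4 : π ≤ 4 := Real.pi_le_four
  have hπ3 : 3 < π := Real.pi_gt_three
  have h := Real.cos_le_one_sub_mul_cos_sq (le_trans hx (by linarith))
  have h16 : π ^ 2 ≤ 16 := by nlinarith
  have h0 : (0:ℝ) < π ^ 2 := by positivity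
  have key : x ^ 2 / 8 ≤ 2 / π ^ 2 * x ^ 2 := by
    rw [div_mul_eq_mul_div, div_le_div_iff₀ (by norm_num) h0]
    nlinarith [sq_nonneg x]
  linarith

lemma inner_nonneg (α c ρ : ℝ) (y : ℝ) :
    0 ≤ (1 - Real.cos (c * hatv1 α y)) * Real.exp (-(ρ * hatv1 α y)) :=
  mul_nonneg (by linarith [Real.cos_le_one (c * hatv1 α y)]) (Real.exp_pos _).le

lemma inner_meas (α c ρ : ℝ) :
    Measurable (fun y => (1 - Real.cos (c * hatv1 α y)) * Real.exp (-(ρ * hatv1 α y))) := by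
  have h := hatv1_meas α
  exact ((measurable_const.sub ((h.const_mul c).cos)).mul ((h.const_mul ρ).neg.exp))

lemma inner_integrable (α c ρ : ℝ) (hα : 1 < α) (hρ : 0 ≤ ρ) :
    Integrable (fun y => (1 - Real.cos (c * hatv1 α y)) * Real.exp (-(ρ * hatv1 α y))) := by
  have hα0 : 0 < α := by linarith
  refine (integrable_piecewise_tail 2 (c ^ 2) (-(2 * α)) (by linarith)).mono'
    (inner_meas α c ρ).aestronglyMeasurable ?_
  filter_upwards with y
  rw [Real.norm_eq_abs, abs_of_nonneg (inner_nonneg α c ρ y)]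
  have hv0 := hatv1_nonneg α y
  have hv1 := hatv1_le_one α y
  have hexp : Real.exp (-(ρ * hatv1 α y)) ≤ 1 := by
    rw [Real.exp_le_one_iff]
    exact neg_nonpos.mpr (mul_nonneg hρ (hatv1_nonneg α y))
  have hcos : 1 - Real.cos (c * hatv1 α y) ≤ min 2 ((c * hatv1 α y) ^ 2 / 2) := by
    refine le_min (by linarith [Real.neg_one_le_cos (c * hatv1 α y)]) ?_
    linarith [Real.one_sub_sq_div_two_le_cos (x := c * hatv1 α y)]
  by_cases h : |y| ≤ 1
  · simp only [h, if_true]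
    calc (1 - Real.cos (c * hatv1 α y)) * Real.exp (-(ρ * hatv1 α y))
        ≤ 2 * 1 := by
          apply mul_le_mul (le_trans hcos (min_le_left _ _)) hexp (Real.exp_pos _).le (by norm_num)
      _ = 2 := by ring
  · simp only [h, if_false]
    have h1 : 1 ≤ |y| := (not_le.mp h).le
    have hv : hatv1 α y = |y| ^ (-α) := hatv1_of_one_le_abs hα0 h1
    have habs : (0:ℝ) < |y| := by linarith
    calc (1 - Real.cos (c * hatv1 α y)) * Real.exp (-(ρ * hatv1 α y))
        ≤ ((c * hatv1 α y) ^ 2 / 2) * 1 :=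
          mul_le_mul (le_trans hcos (min_le_right _ _)) hexp (Real.exp_pos _).le
            (by positivity)
      _ = c ^ 2 * (hatv1 α y ^ 2) / 2 := by ring
      _ ≤ c ^ 2 * |y| ^ (-(2 * α)) := by
          rw [hv]
          have : (|y| ^ (-α)) ^ 2 = |y| ^ (-(2*α)) := by
            rw [← Real.rpow_natCast (|y| ^ (-α)) 2, ← Real.rpow_mul (abs_nonneg y)]
            norm_num
            ring_nf
          rw [this]
          nlinarith [Real.rpow_nonneg (abs_nonneg y) (-(2*α)), sq_nonneg c]

/-- lower bound for the inner integral from an interval estimate -/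
lemma inner_lb (α c ρ : ℝ) (hα : 1 < α) (hρ : 0 ≤ ρ) {L M m : ℝ} (hLM : L ≤ M)
    (hbound : ∀ y ∈ Icc L M,
      m ≤ (1 - Real.cos (c * hatv1 α y)) * Real.exp (-(ρ * hatv1 α y))) :
    m * (M - L) ≤ ∫ y, (1 - Real.cos (c * hatv1 α y)) * Real.exp (-(ρ * hatv1 α y)) := by
  have hint := inner_integrable α c ρ hα hρ
  calc m * (M - L)
      = m * (volume (Icc L M)).toReal := by
        rw [Real.volume_Icc, ENNReal.toReal_ofReal (by linarith)]
    _ ≤ ∫ y in Icc L M, (1 - Real.cos (c * hatv1 α y)) * Real.exp (-(ρ * hatv1 α y)) :=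
        setIntegral_ge_of_const_le_real measurableSet_Icc measure_Icc_lt_top.ne hbound
          hint.integrableOn
    _ ≤ ∫ y, (1 - Real.cos (c * hatv1 α y)) * Real.exp (-(ρ * hatv1 α y)) :=
        setIntegral_le_integral hint (Filter.Eventually.of_forall (inner_nonneg α c ρ))

lemma caseA (α : ℝ) (hα : 1 < α) {ρ θ : ℝ} (hρ : 1 ≤ ρ) (hθ : |θ| ≤ ρ ^ (1 / (2 * α))) :
    (4:ℝ) ^ (-α) / (8 * Real.exp 1) * θ ^ 2 ≤
      ∫ y, (1 - Real.cos ((θ * ρ ^ ((2 * α - 1) / (2 * α))) * hatv1 α y)) *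
        Real.exp (-(ρ * hatv1 α y)) := by
  have hα0 : (0:ℝ) < α := by linarith
  have hρ0 : (0:ℝ) < ρ := by linarith
  set β : ℝ := (2 * α - 1) / (2 * α) with hβ
  set Y : ℝ := ρ ^ α⁻¹ with hYdef
  have hY1 : 1 ≤ Y := Real.one_le_rpow hρ (by positivity)
  have hY0 : (0:ℝ) < Y := by linarith
  have hYinv : Y ^ (-α) = ρ⁻¹ := by
    rw [hYdef, ← Real.rpow_mul hρ0.le, show α⁻¹ * (-α) = -1 by field_simp]
    exact Real.rpow_neg_one ρ
  have hP0 : (0:ℝ) ≤ ρ ^ β := (Real.rpow_pos_of_pos hρ0 β).le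
  set m : ℝ := θ ^ 2 * (ρ ^ β * ((2:ℝ) ^ (-α) * ρ⁻¹)) ^ 2 / 8 * Real.exp (-1) with hm
  have key : ∀ y ∈ Icc Y (2 * Y),
      m ≤ (1 - Real.cos ((θ * ρ ^ β) * hatv1 α y)) * Real.exp (-(ρ * hatv1 α y)) := by
    intro y hy
    obtain ⟨hyL, hyM⟩ := hy
    have hy1 : (1:ℝ) ≤ y := le_trans hY1 hyL
    have hy0 : (0:ℝ) < y := by linarith
    have habs : |y| = y := abs_of_pos hy0
    have hv : hatv1 α y = y ^ (-α) := by
      rw [hatv1_of_one_le_abs hα0 (by rw [habs]; exact hy1), habs]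
    have hvu : y ^ (-α) ≤ ρ⁻¹ := by
      rw [← hYinv]
      exact Real.rpow_le_rpow_of_nonpos hY0 hyL (by linarith)
    have hvl : (2:ℝ) ^ (-α) * ρ⁻¹ ≤ y ^ (-α) := by
      have h2Y : ((2:ℝ) * Y) ^ (-α) ≤ y ^ (-α) :=
        Real.rpow_le_rpow_of_nonpos hy0 hyM (by linarith)
      rwa [Real.mul_rpow (by norm_num) hY0.le, hYinv] at h2Y
    have hv0 : (0:ℝ) ≤ y ^ (-α) := Real.rpow_nonneg hy0.le _
    have hexp : Real.exp (-1) ≤ Real.exp (-(ρ * hatv1 α y)) := by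
      rw [Real.exp_le_exp, neg_le_neg_iff, hv]
      calc ρ * y ^ (-α) ≤ ρ * ρ⁻¹ := mul_le_mul_of_nonneg_left hvu hρ0.le
        _ = 1 := mul_inv_cancel₀ hρ0.ne'
    have hprod : ρ ^ (1 / (2 * α)) * (ρ ^ β * ρ⁻¹) = 1 := by
      rw [← Real.rpow_neg_one ρ, ← Real.rpow_add hρ0, ← Real.rpow_add hρ0,
        show 1 / (2 * α) + (β + -1) = 0 by rw [hβ]; field_simp; ring, Real.rpow_zero]
    have hargabs : |(θ * ρ ^ β) * hatv1 α y| ≤ 1 := by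
      rw [hv, abs_mul, abs_mul, abs_of_nonneg hP0, abs_of_nonneg hv0]
      calc |θ| * ρ ^ β * y ^ (-α) ≤ ρ ^ (1 / (2 * α)) * ρ ^ β * ρ⁻¹ := by
            apply mul_le_mul
            · exact mul_le_mul_of_nonneg_right hθ hP0
            · exact hvu
            · exact hv0
            · positivity
        _ = 1 := by rw [mul_assoc]; exact hprod
    have hcos : ((θ * ρ ^ β) * hatv1 α y) ^ 2 / 8 ≤
        1 - Real.cos ((θ * ρ ^ β) * hatv1 α y) := one_sub_cos_lb hargabs
    have hsq : θ ^ 2 * (ρ ^ β * ((2:ℝ) ^ (-α) * ρ⁻¹)) ^ 2 ≤ ((θ * ρ ^ β) * hatv1 α y) ^ 2 := by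
      rw [hv, show ((θ * ρ ^ β) * y ^ (-α)) ^ 2 = θ ^ 2 * (ρ ^ β * y ^ (-α)) ^ 2 by ring]
      apply mul_le_mul_of_nonneg_left _ (sq_nonneg θ)
      apply pow_le_pow_left₀ (by positivity)
      exact mul_le_mul_of_nonneg_left hvl hP0
    calc m ≤ (((θ * ρ ^ β) * hatv1 α y) ^ 2 / 8) * Real.exp (-(ρ * hatv1 α y)) := by
          rw [hm]
          apply mul_le_mul _ hexp (Real.exp_pos _).le (by positivity)
          linarith
      _ ≤ (1 - Real.cos ((θ * ρ ^ β) * hatv1 α y)) * Real.exp (-(ρ * hatv1 α y)) :=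
          mul_le_mul_of_nonneg_right hcos (Real.exp_pos _).le
  have hIB := inner_lb α (θ * ρ ^ β) ρ hα hρ0.le (by linarith : Y ≤ 2 * Y) key
  refine le_trans (le_of_eq ?_) hIB
  have h1 : (ρ ^ β) ^ 2 * (ρ⁻¹) ^ 2 * ρ ^ α⁻¹ = 1 := by
    rw [← Real.rpow_neg_one ρ, pow_two, pow_two, ← Real.rpow_add hρ0, ← Real.rpow_add hρ0,
      ← Real.rpow_add hρ0, ← Real.rpow_add hρ0,
      show β + β + (-1 + -1) + α⁻¹ = 0 by rw [hβ]; field_simp; ring, Real.rpow_zero]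
  have h2 : ((2:ℝ) ^ (-α)) ^ 2 = (4:ℝ) ^ (-α) := by
    rw [pow_two, ← Real.rpow_add two_pos,
      show (4:ℝ) = (2:ℝ) ^ (2:ℝ) by rw [Real.rpow_two]; norm_num,
      ← Real.rpow_mul (by norm_num : (0:ℝ) ≤ 2) 2 (-α)]
    congr 1
    ring
  have hexp1 : Real.exp (-1) = (Real.exp 1)⁻¹ := Real.exp_neg 1
  have hYe : 2 * Y - Y = Y := by ring
  rw [hYe, hm, hexp1, hYdef]
  have expand : θ ^ 2 * (ρ ^ β * ((2:ℝ) ^ (-α) * ρ⁻¹)) ^ 2 / 8 * (Real.exp 1)⁻¹ * ρ ^ α⁻¹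
      = θ ^ 2 * (((2:ℝ) ^ (-α)) ^ 2) * ((ρ ^ β) ^ 2 * (ρ⁻¹) ^ 2 * ρ ^ α⁻¹) / 8 *
        (Real.exp 1)⁻¹ := by
    ring
  rw [expand, h1, h2, mul_one]
  have he : Real.exp 1 ≠ 0 := (Real.exp_pos 1).ne'
  field_simp

lemma caseB (α : ℝ) (hα : 1 < α) {ρ θ : ℝ} (hρ : 1 ≤ ρ) (hθ : ρ ^ (1 / (2 * α)) < |θ|) :
    ((2:ℝ) ^ α⁻¹ - 1) / (32 * Real.exp 1) * |θ| ^ α⁻¹ ≤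
      ∫ y, (1 - Real.cos ((θ * ρ ^ ((2 * α - 1) / (2 * α))) * hatv1 α y)) *
        Real.exp (-(ρ * hatv1 α y)) := by
  have hα0 : (0:ℝ) < α := by linarith
  have hρ0 : (0:ℝ) < ρ := by linarith
  set β : ℝ := (2 * α - 1) / (2 * α) with hβ
  have hβ0 : (0:ℝ) ≤ β := by rw [hβ]; apply div_nonneg <;> linarith
  have hP1 : (1:ℝ) ≤ ρ ^ β := Real.one_le_rpow hρ hβ0
  have hP0 : (0:ℝ) < ρ ^ β := by linarith
  set s : ℝ := |θ| * ρ ^ β with hs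
  have hsρ : ρ ≤ s := by
    have h1 : ρ ^ (1 / (2 * α)) * ρ ^ β ≤ s := by
      rw [hs]
      exact mul_le_mul_of_nonneg_right hθ.le hP0.le
    calc ρ = ρ ^ (1 / (2 * α) + β) := by
          rw [show 1 / (2 * α) + β = 1 by rw [hβ]; field_simp; ring, Real.rpow_one]
      _ = ρ ^ (1 / (2 * α)) * ρ ^ β := Real.rpow_add hρ0 _ _
      _ ≤ s := h1
  have hs1 : (1:ℝ) ≤ s := le_trans hρ hsρ
  have hs0 : (0:ℝ) < s := by linarith
  set L : ℝ := s ^ α⁻¹ with hL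
  set M : ℝ := (2 * s) ^ α⁻¹ with hM
  have hL1 : (1:ℝ) ≤ L := Real.one_le_rpow hs1 (by positivity)
  have hL0 : (0:ℝ) < L := by linarith
  have hLM : L ≤ M := Real.rpow_le_rpow hs0.le (by linarith) (by positivity)
  have hLinv : L ^ (-α) = s⁻¹ := by
    rw [hL, ← Real.rpow_mul hs0.le, show α⁻¹ * (-α) = -1 by field_simp]
    exact Real.rpow_neg_one s
  have hMinv : M ^ (-α) = (2 * s)⁻¹ := by
    rw [hM, ← Real.rpow_mul (by linarith : (0:ℝ) ≤ 2 * s),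
      show α⁻¹ * (-α) = -1 by field_simp]
    exact Real.rpow_neg_one (2 * s)
  set m : ℝ := Real.exp (-1) / 32 with hm
  have key : ∀ y ∈ Icc L M,
      m ≤ (1 - Real.cos ((θ * ρ ^ β) * hatv1 α y)) * Real.exp (-(ρ * hatv1 α y)) := by
    intro y hy
    obtain ⟨hyL, hyM⟩ := hy
    have hy1 : (1:ℝ) ≤ y := le_trans hL1 hyL
    have hy0 : (0:ℝ) < y := by linarith
    have hv : hatv1 α y = y ^ (-α) := by
      rw [hatv1_of_one_le_abs hα0 (by rw [abs_of_pos hy0]; exact hy1), abs_of_pos hy0]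
    have hv0 : (0:ℝ) ≤ y ^ (-α) := Real.rpow_nonneg hy0.le _
    have hvu : y ^ (-α) ≤ s⁻¹ := by
      rw [← hLinv]
      exact Real.rpow_le_rpow_of_nonpos hL0 hyL (by linarith)
    have hvl : (2 * s)⁻¹ ≤ y ^ (-α) := by
      rw [← hMinv]
      exact Real.rpow_le_rpow_of_nonpos hy0 hyM (by linarith)
    have hexp : Real.exp (-1) ≤ Real.exp (-(ρ * hatv1 α y)) := by
      rw [Real.exp_le_exp, neg_le_neg_iff, hv]
      calc ρ * y ^ (-α) ≤ s * s⁻¹ := mul_le_mul hsρ hvu hv0 hs0.le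
        _ = 1 := mul_inv_cancel₀ hs0.ne'
    have hargeq : |(θ * ρ ^ β) * hatv1 α y| = s * y ^ (-α) := by
      rw [hv, abs_mul, abs_mul, abs_of_nonneg hP0.le, abs_of_nonneg hv0, hs]
    have hargu : |(θ * ρ ^ β) * hatv1 α y| ≤ 1 := by
      rw [hargeq]
      calc s * y ^ (-α) ≤ s * s⁻¹ := mul_le_mul_of_nonneg_left hvu hs0.le
        _ = 1 := mul_inv_cancel₀ hs0.ne'
    have hargl : (1:ℝ) / 2 ≤ |(θ * ρ ^ β) * hatv1 α y| := by
      rw [hargeq]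
      calc (1:ℝ) / 2 = s * (2 * s)⁻¹ := by field_simp
        _ ≤ s * y ^ (-α) := mul_le_mul_of_nonneg_left hvl hs0.le
    have hcos := one_sub_cos_lb hargu
    have hsq : (1:ℝ) / 4 ≤ ((θ * ρ ^ β) * hatv1 α y) ^ 2 := by
      rw [← sq_abs]
      nlinarith [hargl]
    calc m = ((1:ℝ) / 4 / 8) * Real.exp (-1) := by rw [hm]; ring
      _ ≤ (((θ * ρ ^ β) * hatv1 α y) ^ 2 / 8) * Real.exp (-(ρ * hatv1 α y)) :=
          mul_le_mul (by linarith) hexp (Real.exp_pos _).le (by positivity)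
      _ ≤ (1 - Real.cos ((θ * ρ ^ β) * hatv1 α y)) * Real.exp (-(ρ * hatv1 α y)) :=
          mul_le_mul_of_nonneg_right hcos (Real.exp_pos _).le
  have hIB := inner_lb α (θ * ρ ^ β) ρ hα hρ0.le hLM key
  refine le_trans ?_ hIB
  have hML : M - L = ((2:ℝ) ^ α⁻¹ - 1) * s ^ α⁻¹ := by
    rw [hM, hL, Real.mul_rpow (by norm_num) hs0.le]
    ring
  have h2l : (1:ℝ) < (2:ℝ) ^ α⁻¹ := Real.one_lt_rpow (by norm_num) (by positivity)
  have hsθ : |θ| ^ α⁻¹ ≤ s ^ α⁻¹ := by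
    apply Real.rpow_le_rpow (abs_nonneg θ) _ (by positivity)
    rw [hs]
    nlinarith [abs_nonneg θ]
  have hfinal : m * (M - L) = ((2:ℝ) ^ α⁻¹ - 1) / (32 * Real.exp 1) * s ^ α⁻¹ := by
    rw [hML, hm, Real.exp_neg, div_eq_mul_inv, div_eq_mul_inv, mul_inv]
    ring
  rw [hfinal]
  exact mul_le_mul_of_nonneg_left hsθ (div_nonneg (by linarith) (by positivity))

lemma tail_bound (α c : ℝ) (hα : 1 < α) (hc : 0 < c) :
    ∃ K > 0, ∀ θ : ℝ, 1 ≤ |θ| → Real.exp (-(c * |θ| ^ α⁻¹)) ≤ K / |θ| ^ 2 := by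
  set n : ℕ := ⌈2 * α⌉₊ with hn
  have hα0 : (0:ℝ) < α := by linarith
  have hn2α : 2 * α ≤ (n:ℝ) := Nat.le_ceil _
  have hnpos : 0 < (n:ℝ) := by linarith
  have hnne : (n:ℝ) ≠ 0 := hnpos.ne'
  refine ⟨((n:ℝ) / c) ^ n, by positivity, fun θ hθ => ?_⟩
  have hθ0 : (0:ℝ) < |θ| := by linarith
  have hu1 : (1:ℝ) ≤ |θ| ^ α⁻¹ := Real.one_le_rpow hθ (by positivity)
  set x : ℝ := c * |θ| ^ α⁻¹ with hx
  have hx0 : 0 < x := by positivity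
  have h1 : (x / n) ^ n ≤ Real.exp x := by
    calc (x / n) ^ n ≤ (Real.exp (x / n)) ^ n := by
          apply pow_le_pow_left₀ (by positivity)
          linarith [Real.add_one_le_exp (x / n)]
      _ = Real.exp x := by
          rw [← Real.exp_nat_mul, mul_div_cancel₀ _ hnne]
  have h2 : |θ| ^ 2 ≤ ((n:ℝ) / c) ^ n * (x / n) ^ n := by
    have hmul : ((n:ℝ) / c) ^ n * (x / n) ^ n = (|θ| ^ α⁻¹) ^ n := by
      rw [← mul_pow]
      congr 1
      field_simp [hx]
      ring
      exact hx
    rw [hmul, ← Real.rpow_natCast (|θ| ^ α⁻¹) n, ← Real.rpow_mul (abs_nonneg θ)]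
    have h22 : |θ| ^ (2:ℝ) ≤ |θ| ^ (α⁻¹ * n) := by
      apply Real.rpow_le_rpow_of_exponent_le hθ
      calc (2:ℝ) = 2 * α * α⁻¹ := by field_simp
        _ ≤ (n:ℝ) * α⁻¹ := mul_le_mul_of_nonneg_right hn2α (by positivity)
        _ = α⁻¹ * n := by ring
    calc |θ| ^ 2 = |θ| ^ (2:ℝ) := (Real.rpow_two _).symm
      _ ≤ |θ| ^ (α⁻¹ * n) := h22
  rw [le_div_iff₀ (by positivity : (0:ℝ) < |θ| ^ 2)]
  calc Real.exp (-(x)) * |θ| ^ 2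
      ≤ Real.exp (-(x)) * (((n:ℝ) / c) ^ n * (x / n) ^ n) :=
        mul_le_mul_of_nonneg_left h2 (Real.exp_pos _).le
    _ ≤ Real.exp (-(x)) * (((n:ℝ) / c) ^ n * Real.exp x) := by
        apply mul_le_mul_of_nonneg_left _ (Real.exp_pos _).le
        exact mul_le_mul_of_nonneg_left h1 (by positivity)
    _ = ((n:ℝ) / c) ^ n * (Real.exp (-x) * Real.exp x) := by ring
    _ = ((n:ℝ) / c) ^ n := by
        rw [← Real.exp_add, neg_add_cancel, Real.exp_zero, mul_one]

/-- The modulus of the tilted characteristic function is integrably small outside the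
central region: the integral over `{|θ| > ε ρ^{1/(3α)}}` tends to `0` as `ρ → ∞`. -/
theorem stmt15 (α : ℝ) (hα : 1 < α) (ν ε : ℝ) (hν : 0 < ν) (hε : 0 < ε) :
    Filter.Tendsto
      (fun ρ : ℝ =>
        ∫ θ in {θ : ℝ | ε * ρ ^ (1 / (3 * α)) < |θ|},
          Real.exp (-(ν *
            ∫ y : ℝ, (1 - Real.cos (θ * (ρ ^ ((2 * α - 1) / (2 * α)) * hatv1 α y))) *
              Real.exp (-(ρ * hatv1 α y)))))
      atTop (nhds 0) := by
  have hα0 : (0:ℝ) < α := by linarith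
  set cA : ℝ := (4:ℝ) ^ (-α) / (8 * Real.exp 1) with hcA
  have hcA0 : 0 < cA := by
    rw [hcA]; positivity
  set cB : ℝ := ((2:ℝ) ^ α⁻¹ - 1) / (32 * Real.exp 1) with hcB
  have h2l : (1:ℝ) < (2:ℝ) ^ α⁻¹ := Real.one_lt_rpow (by norm_num) (by positivity)
  have hcB0 : 0 < cB := by
    rw [hcB]; apply div_pos (by linarith) (by positivity)
  obtain ⟨K, hK0, hKb⟩ := tail_bound α (ν * cB) hα (by positivity)
  set g : ℝ → ℝ := fun θ =>
    Real.exp (-(ν * cA) * θ ^ 2) + (if |θ| ≤ 1 then K else K * |θ| ^ (-(2:ℝ))) with hg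
  have hg_int : Integrable g :=
    (integrable_exp_neg_mul_sq (by positivity)).add
      (integrable_piecewise_tail K K (-(2:ℝ)) (by norm_num))
  have hg0 : ∀ θ, 0 ≤ g θ := by
    intro θ
    apply add_nonneg (Real.exp_pos _).le
    split
    · exact hK0.le
    · positivity
  -- the family of functions
  set f : ℝ → ℝ → ℝ := fun ρ θ =>
    Real.exp (-(ν * ∫ y : ℝ, (1 - Real.cos (θ * (ρ ^ ((2 * α - 1) / (2 * α)) * hatv1 α y))) *
      Real.exp (-(ρ * hatv1 α y)))) with hf
  have hSmeas : ∀ ρ : ℝ, MeasurableSet {θ : ℝ | ε * ρ ^ (1 / (3 * α)) < |θ|} :=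
    fun ρ => (isOpen_lt continuous_const continuous_abs).measurableSet
  have hrw : (fun ρ : ℝ => ∫ θ in {θ : ℝ | ε * ρ ^ (1 / (3 * α)) < |θ|}, f ρ θ) =
      fun ρ : ℝ => ∫ θ, Set.indicator {θ : ℝ | ε * ρ ^ (1 / (3 * α)) < |θ|} (f ρ) θ := by
    funext ρ
    rw [integral_indicator (hSmeas ρ)]
  show Tendsto (fun ρ : ℝ => ∫ θ in {θ : ℝ | ε * ρ ^ (1 / (3 * α)) < |θ|}, f ρ θ) atTop (nhds 0)
  rw [hrw]
  have hmain := tendsto_integral_filter_of_dominated_convergence (μ := volume)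
    (F := fun ρ : ℝ => Set.indicator {θ : ℝ | ε * ρ ^ (1 / (3 * α)) < |θ|} (f ρ))
    (f := fun _ : ℝ => (0:ℝ)) (l := atTop) g ?_ ?_ hg_int ?_
  · simpa using hmain
  · -- measurability
    apply Eventually.of_forall
    intro ρ
    apply AEStronglyMeasurable.indicator _ (hSmeas ρ)
    have hFm : StronglyMeasurable (fun p : ℝ × ℝ =>
        (1 - Real.cos (p.1 * (ρ ^ ((2 * α - 1) / (2 * α)) * hatv1 α p.2))) *
          Real.exp (-(ρ * hatv1 α p.2))) := by
      apply Measurable.stronglyMeasurable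
      have hv : Measurable (fun p : ℝ × ℝ => hatv1 α p.2) := (hatv1_meas α).comp measurable_snd
      exact (measurable_const.sub
        ((measurable_fst.mul (hv.const_mul _)).cos)).mul ((hv.const_mul ρ).neg.exp)
    have hI : StronglyMeasurable (fun θ : ℝ =>
        ∫ y : ℝ, (1 - Real.cos (θ * (ρ ^ ((2 * α - 1) / (2 * α)) * hatv1 α y))) *
          Real.exp (-(ρ * hatv1 α y))) := hFm.integral_prod_right'
    exact (((hI.measurable.const_mul ν).neg).exp).aestronglyMeasurable
  · -- bound
    filter_upwards [eventually_ge_atTop (1:ℝ)] with ρ hρ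
    apply Eventually.of_forall
    intro θ
    by_cases hmem : θ ∈ {θ : ℝ | ε * ρ ^ (1 / (3 * α)) < |θ|}
    · rw [Set.indicator_of_mem hmem]
      have hfpos : 0 < f ρ θ := Real.exp_pos _
      rw [Real.norm_eq_abs, abs_of_pos hfpos]
      -- rewrite the inner integral to the associativity used in caseA/caseB
      have hIeq : (∫ y : ℝ, (1 - Real.cos (θ * (ρ ^ ((2 * α - 1) / (2 * α)) * hatv1 α y))) *
            Real.exp (-(ρ * hatv1 α y))) =
          ∫ y : ℝ, (1 - Real.cos ((θ * ρ ^ ((2 * α - 1) / (2 * α))) * hatv1 α y)) *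
            Real.exp (-(ρ * hatv1 α y)) := by
        congr 1
        funext y
        rw [mul_assoc]
      by_cases hθc : |θ| ≤ ρ ^ (1 / (2 * α))
      · have hA := caseA α hα hρ hθc
        have : f ρ θ ≤ Real.exp (-(ν * cA) * θ ^ 2) := by
          rw [hf]
          simp only []
          rw [hIeq] at *
          apply Real.exp_le_exp.mpr
          have : ν * (cA * θ ^ 2) ≤ ν * ∫ y : ℝ,
              (1 - Real.cos ((θ * ρ ^ ((2 * α - 1) / (2 * α))) * hatv1 α y)) *
                Real.exp (-(ρ * hatv1 α y)) :=
            mul_le_mul_of_nonneg_left (by rw [hcA] at *; linarith [hA]) hν.le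
          nlinarith [this]
        refine le_trans this ?_
        rw [hg]
        apply le_add_of_nonneg_right
        split
        · exact hK0.le
        · positivity
      · push_neg at hθc
        have hρpow1 : (1:ℝ) ≤ ρ ^ (1 / (2 * α)) := Real.one_le_rpow hρ (by positivity)
        have hθ1 : (1:ℝ) ≤ |θ| := le_trans hρpow1 hθc.le
        have hB := caseB α hα hρ hθc
        have hstep : f ρ θ ≤ Real.exp (-(ν * cB * |θ| ^ α⁻¹)) := by
          rw [hf]
          simp only []
          rw [hIeq]
          apply Real.exp_le_exp.mpr
          have : ν * (cB * |θ| ^ α⁻¹) ≤ ν * ∫ y : ℝ,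
              (1 - Real.cos ((θ * ρ ^ ((2 * α - 1) / (2 * α))) * hatv1 α y)) *
                Real.exp (-(ρ * hatv1 α y)) :=
            mul_le_mul_of_nonneg_left (by rw [hcB] at *; linarith [hB]) hν.le
          nlinarith [this]
        have htail := hKb θ hθ1
        have hrw2 : K * |θ| ^ (-(2:ℝ)) = K / |θ| ^ 2 := by
          rw [Real.rpow_neg (abs_nonneg θ), Real.rpow_two, div_eq_mul_inv]
        have hnotle : ¬ |θ| ≤ 1 := by
          by_contra h
          have := lt_of_lt_of_le hθc h
          linarith
        rw [hg]
        simp only [hnotle, if_false]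
        calc f ρ θ ≤ Real.exp (-(ν * cB * |θ| ^ α⁻¹)) := hstep
          _ ≤ K / |θ| ^ 2 := htail
          _ = K * |θ| ^ (-(2:ℝ)) := hrw2.symm
          _ ≤ Real.exp (-(ν * cA) * θ ^ 2) + K * |θ| ^ (-(2:ℝ)) :=
              le_add_of_nonneg_left (Real.exp_pos _).le
    · rw [Set.indicator_of_notMem hmem]
      simpa using hg0 θ
  · -- pointwise limit
    apply Eventually.of_forall
    intro θ
    have htends : Tendsto (fun ρ : ℝ => ε * ρ ^ (1 / (3 * α))) atTop atTop :=
      (tendsto_rpow_atTop (by positivity)).const_mul_atTop hε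
    have hev : ∀ᶠ ρ : ℝ in atTop,
        Set.indicator {θ' : ℝ | ε * ρ ^ (1 / (3 * α)) < |θ'|} (f ρ) θ = 0 := by
      filter_upwards [htends.eventually_ge_atTop |θ|] with ρ hρ
      apply Set.indicator_of_notMem
      simp only [Set.mem_setOf_eq, not_lt]
      exact hρ
    exact Tendsto.congr' (hev.mono fun ρ h => h.symm) tendsto_const_nhds
end
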